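/- If a finite simple graph G on n vertices admits an acyclic 5-coloring, then G admits an equitable 3-partition (V_1, V_2, V_3) of its vertex set such that the induced subgraphs G[V_1] and G[V_2] are both forests (no condition is imposed on G[V_3]). In particular (via Borodin's theorem that every planar graph has an acyclic 5-coloring), every planar graph admits an equitable 3-partition into two forests and one graph. -/
import Mathlib

open SimpleGraph

/-- An acyclic `k`-coloring of `G`: a partition of the vertex set into `k` independent sets
such that the union of any two color classes induces a forest. -/
def IsAcyclicColoring {V : Type*} (G : SimpleGraph V) (k : ℕ) (A : Fin k → Set V) : Prop :=
  (∀ i j, i ≠ j → Disjoint (A i) (A j)) ∧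
  (⋃ i, A i) = Set.univ ∧
  (∀ i, ∀ u ∈ A i, ∀ v ∈ A i, ¬ G.Adj u v) ∧
  (∀ i j, i ≠ j → (G.induce (A i ∪ A j)).IsAcyclic)

lemma induce_acyclic_mono {V : Type*} (G : SimpleGraph V) {s t : Set V} (h : s ⊆ t)
    (ht : (G.induce t).IsAcyclic) : (G.induce s).IsAcyclic := by
  intro v p hp
  exact ht (p.map (G.induceHomOfLE h).toHom) (hp.map (G.induceHomOfLE h).injective)

theorem equitable_three_partition_two_forests_one_graph
    {V : Type*} [Fintype V] [DecidableEq V] (G : SimpleGraph V)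
    (hcol : ∃ A : Fin 5 → Set V, IsAcyclicColoring G 5 A) :
    ∃ V₁ V₂ V₃ : Finset V,
      Disjoint V₁ V₂ ∧ Disjoint V₁ V₃ ∧ Disjoint V₂ V₃ ∧
      V₁ ∪ V₂ ∪ V₃ = Finset.univ ∧
      |(V₁.card : ℤ) - (V₂.card : ℤ)| ≤ 1 ∧
      |(V₁.card : ℤ) - (V₃.card : ℤ)| ≤ 1 ∧
      |(V₂.card : ℤ) - (V₃.card : ℤ)| ≤ 1 ∧
      (G.induce (V₁ : Set V)).IsAcyclic ∧ (G.induce (V₂ : Set V)).IsAcyclic := by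
  classical
  obtain ⟨A, hdisjA, hcover, hind, hforest⟩ := hcol
  set n := Fintype.card V with hn
  let B : Fin 5 → Finset V := fun i => Finset.univ.filter (fun v => v ∈ A i)
  have hBcoe : ∀ i, (B i : Set V) = A i := by
    intro i; ext v; simp [B]
  have hBdisj : ∀ i j, i ≠ j → Disjoint (B i) (B j) := by
    intro i j hij
    rw [Finset.disjoint_left]
    intro v hvi hvj
    exact ((hdisjA i j hij).le_bot ⟨by simpa [B] using hvi, by simpa [B] using hvj⟩)
  have hBsum : ∑ i, (B i).card = n := by
    rw [← Finset.card_biUnion (fun i _ j _ hij => hBdisj i j hij)]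
    have : Finset.univ.biUnion B = Finset.univ := by
      apply Finset.eq_univ_iff_forall.mpr
      intro v
      have : v ∈ ⋃ i, A i := by rw [hcover]; trivial
      obtain ⟨i, hi⟩ := Set.mem_iUnion.mp this
      exact Finset.mem_biUnion.mpr ⟨i, Finset.mem_univ _, by simp [B, hi]⟩
    rw [this, Finset.card_univ]
  -- sort descending
  let σ := Tuple.sort (fun i => (B i).card)
  let e : Fin 5 → Fin 5 := fun k => σ k.rev
  have he_inj : Function.Injective e := fun a b hab => Fin.rev_injective (σ.injective hab)
  let D : Fin 5 → Finset V := fun k => B (e k)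
  have hDdisj : ∀ k l : Fin 5, k ≠ l → Disjoint (D k) (D l) :=
    fun k l hkl => hBdisj _ _ (fun h => hkl (he_inj h))
  have hDcoe : ∀ k, (D k : Set V) = A (e k) := fun k => hBcoe (e k)
  have hmono := Tuple.monotone_sort (fun i => (B i).card)
  have hd01 : (D 1).card ≤ (D 0).card := hmono (show (1:Fin 5).rev ≤ (0:Fin 5).rev by decide)
  have hd12 : (D 2).card ≤ (D 1).card := hmono (show (2:Fin 5).rev ≤ (1:Fin 5).rev by decide)
  have hd23 : (D 3).card ≤ (D 2).card := hmono (show (3:Fin 5).rev ≤ (2:Fin 5).rev by decide)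
  have hd34 : (D 4).card ≤ (D 3).card := hmono (show (4:Fin 5).rev ≤ (3:Fin 5).rev by decide)
  have hsum5 : (D 0).card + (D 1).card + (D 2).card + (D 3).card + (D 4).card = n := by
    have hb : Function.Bijective e := Finite.injective_iff_bijective.mp he_inj
    have := Fintype.sum_bijective e hb (fun k => (D k).card) (fun i => (B i).card)
      (fun k => rfl)
    rw [hBsum] at this
    simpa [Fin.sum_univ_five] using this
  have coesub : ∀ (W : Finset V) (k l : Fin 5), W ⊆ D k ∪ D l →
      (W : Set V) ⊆ A (e k) ∪ A (e l) := by
    intro W k l hsub v hv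
    rcases Finset.mem_union.mp (hsub hv) with h | h
    · exact Or.inl ((hDcoe k) ▸ (Finset.mem_coe.mpr h))
    · exact Or.inr ((hDcoe l) ▸ (Finset.mem_coe.mpr h))
  -- the common wrapper
  have key : ∀ (W1 W2 : Finset V) (i j k l : Fin 5), i ≠ j → k ≠ l →
      (W1 : Set V) ⊆ A i ∪ A j → (W2 : Set V) ⊆ A k ∪ A l → Disjoint W1 W2 →
      W1.card = (n+2)/3 → W2.card = (n+1)/3 →
      (∃ V₁ V₂ V₃ : Finset V,
        Disjoint V₁ V₂ ∧ Disjoint V₁ V₃ ∧ Disjoint V₂ V₃ ∧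
        V₁ ∪ V₂ ∪ V₃ = Finset.univ ∧
        |(V₁.card : ℤ) - (V₂.card : ℤ)| ≤ 1 ∧
        |(V₁.card : ℤ) - (V₃.card : ℤ)| ≤ 1 ∧
        |(V₂.card : ℤ) - (V₃.card : ℤ)| ≤ 1 ∧
        (G.induce (V₁ : Set V)).IsAcyclic ∧ (G.induce (V₂ : Set V)).IsAcyclic) := by
    intro W1 W2 i j k l hij hkl hs1 hs2 hd h1 h2
    have h3 : (Finset.univ \ (W1 ∪ W2)).card = n - ((n+2)/3 + (n+1)/3) := by
      rw [Finset.card_sdiff_of_subset (Finset.subset_univ _), Finset.card_union_of_disjoint hd,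
        h1, h2, Finset.card_univ]
    have hts : (n+2)/3 + (n+1)/3 ≤ n := by omega
    refine ⟨W1, W2, Finset.univ \ (W1 ∪ W2), hd,
      Finset.disjoint_sdiff.mono_left Finset.subset_union_left,
      Finset.disjoint_sdiff.mono_left Finset.subset_union_right,
      Finset.union_sdiff_of_subset (Finset.subset_univ _), ?_, ?_, ?_,
      induce_acyclic_mono G hs1 (hforest i j hij),
      induce_acyclic_mono G hs2 (hforest k l hkl)⟩
    · rw [h1, h2, abs_le]; constructor <;> [skip; skip] <;> push_cast <;> omega
    · rw [h1, h3, abs_le]; constructor <;> push_cast <;> omega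
    · rw [h2, h3, abs_le]; constructor <;> push_cast <;> omega
  have hc01 : (n+2)/3 ≤ (D 0).card + (D 1).card := by omega
  by_cases hcaseA : (n+1)/3 ≤ (D 2).card + (D 3).card
  · -- V1 ⊆ D0 ∪ D1, V2 ⊆ D2 ∪ D3
    obtain ⟨W1, hW1sub, hW1card⟩ := Finset.exists_subset_card_eq
      (show (n+2)/3 ≤ (D 0 ∪ D 1).card by
        rw [Finset.card_union_of_disjoint (hDdisj 0 1 (by decide))]; omega)
    obtain ⟨W2, hW2sub, hW2card⟩ := Finset.exists_subset_card_eq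
      (show (n+1)/3 ≤ (D 2 ∪ D 3).card by
        rw [Finset.card_union_of_disjoint (hDdisj 2 3 (by decide))]; omega)
    have hdisjU : Disjoint (D 0 ∪ D 1) (D 2 ∪ D 3) := by
      rw [Finset.disjoint_union_left, Finset.disjoint_union_right, Finset.disjoint_union_right]
      exact ⟨⟨hDdisj 0 2 (by decide), hDdisj 0 3 (by decide)⟩,
        hDdisj 1 2 (by decide), hDdisj 1 3 (by decide)⟩
    exact key W1 W2 (e 0) (e 1) (e 2) (e 3)
      (fun h => by exact absurd (he_inj h) (by decide))
      (fun h => by exact absurd (he_inj h) (by decide))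
      (coesub W1 0 1 hW1sub) (coesub W2 2 3 hW2sub)
      (hdisjU.mono hW1sub hW2sub) hW1card hW2card
  · by_cases hcaseB1 : (n+2)/3 + (n+1)/3 ≤ (D 0).card + (D 1).card
    · -- both within D0 ∪ D1
      obtain ⟨W1, hW1sub, hW1card⟩ := Finset.exists_subset_card_eq
        (show (n+2)/3 ≤ (D 0 ∪ D 1).card by
          rw [Finset.card_union_of_disjoint (hDdisj 0 1 (by decide))]; omega)
      obtain ⟨W2, hW2sub, hW2card⟩ := Finset.exists_subset_card_eq
        (show (n+1)/3 ≤ ((D 0 ∪ D 1) \ W1).card by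
          rw [Finset.card_sdiff_of_subset hW1sub,
            Finset.card_union_of_disjoint (hDdisj 0 1 (by decide)), hW1card]; omega)
      exact key W1 W2 (e 0) (e 1) (e 0) (e 1)
        (fun h => by exact absurd (he_inj h) (by decide))
        (fun h => by exact absurd (he_inj h) (by decide))
        (coesub W1 0 1 hW1sub) (coesub W2 0 1 (hW2sub.trans Finset.sdiff_subset))
        (Finset.disjoint_sdiff.mono_right hW2sub) hW1card hW2card
    · -- B2: V1 = D1 ∪ W, V2 = (D0 \ W) ∪ Z
      push_neg at hcaseA hcaseB1
      obtain ⟨W, hWsub, hWcard⟩ := Finset.exists_subset_card_eq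
        (show (n+2)/3 - (D 1).card ≤ (D 0).card by omega)
      have hWD1 : Disjoint (D 1) W := (hDdisj 1 0 (by decide)).mono_right hWsub
      have hV1card : (D 1 ∪ W).card = (n+2)/3 := by
        rw [Finset.card_union_of_disjoint hWD1, hWcard]; omega
      obtain ⟨Z, hZsub, hZcard⟩ := Finset.exists_subset_card_eq
        (show (n+1)/3 - ((D 0).card - ((n+2)/3 - (D 1).card)) ≤ (D 2).card by omega)
      have hZD0 : Disjoint (D 0 \ W) Z :=
        ((hDdisj 0 2 (by decide)).mono_left Finset.sdiff_subset).mono_right hZsub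
      have hV2card : ((D 0 \ W) ∪ Z).card = (n+1)/3 := by
        rw [Finset.card_union_of_disjoint hZD0, Finset.card_sdiff_of_subset hWsub, hWcard, hZcard]
        omega
      have hdisj12 : Disjoint (D 1 ∪ W) ((D 0 \ W) ∪ Z) := by
        rw [Finset.disjoint_union_left, Finset.disjoint_union_right,
          Finset.disjoint_union_right]
        exact ⟨⟨(hDdisj 1 0 (by decide)).mono_right Finset.sdiff_subset,
          (hDdisj 1 2 (by decide)).mono_right hZsub⟩,
          Finset.disjoint_sdiff, (hDdisj 0 2 (by decide)).mono hWsub hZsub⟩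
      exact key (D 1 ∪ W) ((D 0 \ W) ∪ Z) (e 1) (e 0) (e 0) (e 2)
        (fun h => by exact absurd (he_inj h) (by decide))
        (fun h => by exact absurd (he_inj h) (by decide))
        (coesub _ 1 0 (Finset.union_subset_union_right hWsub))
        (coesub _ 0 2 (Finset.union_subset_union Finset.sdiff_subset hZsub))
        hdisj12 hV1card hV2card
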